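/- Let θ₂, θ₃ > 0, let r₁, r₂ > 0 with r₁ ≠ r₂, and let y₂, y₃ ∈ ℝ. If y₂·4((θ₃/r)¹² − (θ₃/r)⁶) + y₃·4θ₂(12θ₃¹¹/r¹² − 6θ₃⁵/r⁶) = 0 for both r = r₁ and r = r₂, then y₂ = 0 and y₃ = 0. -/

import Mathlib

theorem stmt14 (θ₂ θ₃ r₁ r₂ y₂ y₃ : ℝ) (h2 : 0 < θ₂) (h3 : 0 < θ₃)
    (hr₁ : 0 < r₁) (hr₂ : 0 < r₂) (hne : r₁ ≠ r₂)
    (h1 : y₂ * (4 * ((θ₃ / r₁) ^ 12 - (θ₃ / r₁) ^ 6)) +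
        y₃ * (4 * θ₂ * (12 * θ₃ ^ 11 / r₁ ^ 12 - 6 * θ₃ ^ 5 / r₁ ^ 6)) = 0)
    (h2' : y₂ * (4 * ((θ₃ / r₂) ^ 12 - (θ₃ / r₂) ^ 6)) +
        y₃ * (4 * θ₂ * (12 * θ₃ ^ 11 / r₂ ^ 12 - 6 * θ₃ ^ 5 / r₂ ^ 6)) = 0) :
    y₂ = 0 ∧ y₃ = 0 := by
  have hr1 : r₁ ≠ 0 := hr₁.ne'
  have hr2 : r₂ ≠ 0 := hr₂.ne'
  have h3' : θ₃ ≠ 0 := h3.ne'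
  have e1 : (y₂*θ₃ + 12*y₃*θ₂) * θ₃^6 = (y₂*θ₃ + 6*y₃*θ₂) * r₁^6 := by
    have hc : (4*θ₃^5*r₁^6 : ℝ) ≠ 0 := by positivity
    apply mul_right_cancel₀ hc
    field_simp at h1
    linear_combination r₁^6 * h1
  have e2 : (y₂*θ₃ + 12*y₃*θ₂) * θ₃^6 = (y₂*θ₃ + 6*y₃*θ₂) * r₂^6 := by
    have hc : (4*θ₃^5*r₂^6 : ℝ) ≠ 0 := by positivity
    apply mul_right_cancel₀ hc
    field_simp at h2'
    linear_combination r₂^6 * h2'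
  have hb : y₂*θ₃ + 6*y₃*θ₂ = 0 := by
    by_contra hb
    have h6 : r₁^6 = r₂^6 := mul_left_cancel₀ hb (e1.symm.trans e2)
    rcases lt_trichotomy r₁ r₂ with h | h | h
    · exact absurd h6 (ne_of_lt (pow_lt_pow_left₀ h hr₁.le (by norm_num)))
    · exact hne h
    · exact absurd h6.symm (ne_of_lt (pow_lt_pow_left₀ h hr₂.le (by norm_num)))
  have ha : y₂*θ₃ + 12*y₃*θ₂ = 0 := by
    have h0 : (y₂*θ₃ + 12*y₃*θ₂) * θ₃^6 = 0 := by rw [e1, hb]; ring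
    rcases mul_eq_zero.mp h0 with h | h
    · exact h
    · exact absurd h (pow_ne_zero 6 h3')
  have hy3 : y₃ = 0 := by
    have h6 : y₃ * θ₂ = 0 := by linarith
    rcases mul_eq_zero.mp h6 with h | h
    · exact h
    · exact absurd h h2.ne'
  have hy2 : y₂ = 0 := by
    have : y₂ * θ₃ = 0 := by rw [hy3] at hb; linarith
    rcases mul_eq_zero.mp this with h | h
    · exact h
    · exact absurd h h3'
  exact ⟨hy2, hy3⟩
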